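/- Let T be a ℚ-weighted tile all of whose rectangles can be chosen with corners having rational coordinates. Then T ℚ-shapetiles a square if and only if the weighted area of T is not zero. -/

import Mathlib

open Finset

/-- Indicator (with value 1) of the rectangle `[b1,b2) × [c1,c2)`. -/
noncomputable def rectInd (b1 b2 c1 c2 : ℝ) (p : ℝ × ℝ) : ℚ :=
  if b1 ≤ p.1 ∧ p.1 < b2 ∧ c1 ≤ p.2 ∧ p.2 < c2 then 1 else 0

/-- `T` ℚ-shapetiles a square: some square `[0,s) × [0,s)` is a finite ℚ-linear
combination of translates of rescalings `T(ρ)` of `T`. -/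
noncomputable def QShapeTilesSquare (T : ℝ × ℝ → ℚ) : Prop :=
  ∃ (s : ℝ), 0 < s ∧
    ∃ (n : ℕ) (a : Fin n → ℚ) (ρ : Fin n → ℝ) (v : Fin n → ℝ × ℝ),
      (∀ i, 0 < ρ i) ∧
      ∀ p : ℝ × ℝ, rectInd 0 s 0 s p =
        ∑ i, a i * T ((p.1 - (v i).1) / ρ i, (p.2 - (v i).2) / ρ i)

set_option linter.unusedVariables false

abbrev Rng := AddMonoidAlgebra ℚ (ℤ × ℤ)
noncomputable def Ψ (k : ℕ) : Rng →+* Rng :=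
  AddMonoidAlgebra.mapDomainRingHom ℚ (zsmulAddGroupHom (k : ℤ))
lemma Ψ_single (k : ℕ) (u : ℤ × ℤ) (c : ℚ) :
    Ψ k (AddMonoidAlgebra.single u c) = AddMonoidAlgebra.single ((k : ℤ) • u) c := by
  simp [Ψ, AddMonoidAlgebra.mapDomainRingHom, Finsupp.mapDomain_single, zsmulAddGroupHom]

lemma Ψ_apply (k : ℕ) (F : Rng) : Ψ k F = AddMonoidAlgebra.mapDomain (fun u => (k:ℤ) • u) F := rfl

lemma Ψ_coeff (k : ℕ) (F : Rng) :
    (Ψ k F).coeff = Finsupp.mapDomain (fun u => (k:ℤ) • u) F.coeff := rfl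

-- integer reindexing lemma
lemma sum_base_rep {M : Type*} [AddCommMonoid M] (k m : ℤ) (hk : 0 < k) (hm : 0 ≤ m)
    (f : ℤ → M) :
    ∑ p ∈ (Finset.Ico (0:ℤ) k) ×ˢ (Finset.Ico (0:ℤ) m), f (p.1 + k * p.2)
      = ∑ t ∈ Finset.Ico (0:ℤ) (k*m), f t := by
  refine Finset.sum_nbij' (fun p => p.1 + k * p.2) (fun t => (t % k, t / k)) ?_ ?_ ?_ ?_ ?_
  · rintro ⟨i, j⟩ hp
    simp only [Finset.mem_product, Finset.mem_Ico] at hp ⊢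
    obtain ⟨⟨hi0, hik⟩, hj0, hjm⟩ := hp
    constructor
    · positivity
    · have h1 : i + k * j < k * (j + 1) := by ring_nf; omega
      have h2 : k * (j+1) ≤ k * m := by
        apply mul_le_mul_of_nonneg_left (by omega) (by omega)
      omega
  · intro t ht
    simp only [Finset.mem_Ico] at ht
    simp only [Finset.mem_product, Finset.mem_Ico]
    refine ⟨⟨Int.emod_nonneg t (by omega), Int.emod_lt_of_pos t hk⟩,
      Int.ediv_nonneg ht.1 (by omega), ?_⟩
    rw [Int.ediv_lt_iff_lt_mul hk, mul_comm]
    exact ht.2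
  · rintro ⟨i, j⟩ hp
    simp only [Finset.mem_product, Finset.mem_Ico] at hp
    obtain ⟨⟨hi0, hik⟩, hj0, hjm⟩ := hp
    have h1 : (i + k * j) % k = i := by
      rw [Int.add_mul_emod_self_left, Int.emod_eq_of_lt hi0 hik]
    have h2 : (i + k * j) / k = j := by
      rw [Int.add_mul_ediv_left i j (by omega : k ≠ 0), Int.ediv_eq_zero_of_lt hi0 hik, zero_add]
    simp [h1, h2]
  · intro t ht
    simp only
    exact Int.emod_add_mul_ediv t k
  · intro p hp
    rfl

noncomputable def sigX (k : ℕ) : Rng :=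
  ∑ i ∈ Finset.Ico (0:ℤ) k, AddMonoidAlgebra.single (i, 0) 1
noncomputable def sigY (k : ℕ) : Rng :=
  ∑ j ∈ Finset.Ico (0:ℤ) k, AddMonoidAlgebra.single (0, j) 1
noncomputable def Blk (k : ℕ) : Rng :=
  ∑ w ∈ (Finset.Ico (0:ℤ) k) ×ˢ (Finset.Ico (0:ℤ) k), AddMonoidAlgebra.single w 1

lemma sigX_mul_sigY (k : ℕ) : sigX k * sigY k = Blk k := by
  rw [sigX, sigY, Blk, Finset.sum_mul_sum, ← Finset.sum_product']
  refine Finset.sum_congr rfl fun w hw => ?_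
  rw [AddMonoidAlgebra.single_mul_single, one_mul]
  congr 1
  exact Prod.ext (by simp) (by simp)

lemma sigX_mul (k m : ℕ) (hk : 1 ≤ k) : sigX (k * m) = sigX k * Ψ k (sigX m) := by
  rw [sigX, sigX, sigX, map_sum, Finset.mul_sum]
  have hps : ∀ j : ℤ, Ψ k (AddMonoidAlgebra.single ((j:ℤ), (0:ℤ)) (1:ℚ))
      = AddMonoidAlgebra.single ((k:ℤ) * j, (0:ℤ)) 1 := by
    intro j
    rw [Ψ_apply, AddMonoidAlgebra.mapDomain_single]
    norm_num [Prod.smul_def, smul_eq_mul]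
  have hrhs : ∀ j ∈ Finset.Ico (0:ℤ) m,
      (∑ i ∈ Finset.Ico (0:ℤ) k, AddMonoidAlgebra.single ((i:ℤ),(0:ℤ)) (1:ℚ)) *
        Ψ k (AddMonoidAlgebra.single ((j:ℤ), (0:ℤ)) (1:ℚ))
      = ∑ i ∈ Finset.Ico (0:ℤ) k, AddMonoidAlgebra.single (i + (k:ℤ)*j, (0:ℤ)) 1 := by
    intro j _
    rw [Finset.sum_mul]
    refine Finset.sum_congr rfl fun i _ => ?_
    rw [hps, AddMonoidAlgebra.single_mul_single, one_mul]
    simp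
  rw [Finset.sum_congr rfl hrhs, Finset.sum_comm, ← Finset.sum_product']
  have := sum_base_rep (k := (k:ℤ)) (m := (m:ℤ)) (by exact_mod_cast hk) (by positivity)
    (fun t => (AddMonoidAlgebra.single ((t:ℤ),(0:ℤ)) (1:ℚ)))
  rw [this]
  norm_cast

lemma sigY_mul (k m : ℕ) (hk : 1 ≤ k) : sigY (k * m) = sigY k * Ψ k (sigY m) := by
  rw [sigY, sigY, sigY, map_sum, Finset.mul_sum]
  have hps : ∀ j : ℤ, Ψ k (AddMonoidAlgebra.single ((0:ℤ), (j:ℤ)) (1:ℚ))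
      = AddMonoidAlgebra.single ((0:ℤ), (k:ℤ) * j) 1 := by
    intro j
    rw [Ψ_apply, AddMonoidAlgebra.mapDomain_single]
    norm_num [Prod.smul_def, smul_eq_mul]
  have hrhs : ∀ j ∈ Finset.Ico (0:ℤ) m,
      (∑ i ∈ Finset.Ico (0:ℤ) k, AddMonoidAlgebra.single ((0:ℤ),(i:ℤ)) (1:ℚ)) *
        Ψ k (AddMonoidAlgebra.single ((0:ℤ), (j:ℤ)) (1:ℚ))
      = ∑ i ∈ Finset.Ico (0:ℤ) k, AddMonoidAlgebra.single ((0:ℤ), i + (k:ℤ)*j) 1 := by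
    intro j _
    rw [Finset.sum_mul]
    refine Finset.sum_congr rfl fun i _ => ?_
    rw [hps, AddMonoidAlgebra.single_mul_single, one_mul]
    simp
  rw [Finset.sum_congr rfl hrhs, Finset.sum_comm, ← Finset.sum_product']
  have := sum_base_rep (k := (k:ℤ)) (m := (m:ℤ)) (by exact_mod_cast hk) (by positivity)
    (fun t => (AddMonoidAlgebra.single ((0:ℤ),(t:ℤ)) (1:ℚ)))
  rw [this]
  norm_cast

/-- Realization of a grid tile as a function on the plane. -/
noncomputable def Φ (F : Rng) (p : ℝ × ℝ) : ℚ := F.coeff (⌊p.1⌋, ⌊p.2⌋)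

lemma mul_apply' (e B : Rng) (v : ℤ × ℤ) :
    (e * B).coeff v = ∑ w ∈ e.coeff.support, e.coeff w * B.coeff (v - w) := by
  conv_lhs => rw [← AddMonoidAlgebra.sum_coeff_single e]
  rw [Finsupp.sum, Finset.sum_mul, AddMonoidAlgebra.coeff_sum, Finsupp.finset_sum_apply]
  refine Finset.sum_congr rfl fun w _ => ?_
  rw [AddMonoidAlgebra.coeff_single_mul_apply, neg_add_eq_sub]

lemma Φ_mul (e B : Rng) (p : ℝ × ℝ) :
    Φ (e * B) p = ∑ w ∈ e.coeff.support, e.coeff w * Φ B (p.1 - (w.1 : ℝ), p.2 - (w.2 : ℝ)) := by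
  rw [Φ, mul_apply']
  refine Finset.sum_congr rfl fun w _ => ?_
  congr 1
  rw [Φ]
  congr 1
  exact Prod.ext (by simp [Int.floor_sub_intCast]) (by simp [Int.floor_sub_intCast])

lemma Blk_apply (k : ℕ) (u : ℤ × ℤ) :
    (Blk k).coeff u = if 0 ≤ u.1 ∧ u.1 < k ∧ 0 ≤ u.2 ∧ u.2 < k then 1 else 0 := by
  classical
  rw [Blk, AddMonoidAlgebra.coeff_sum, Finsupp.finset_sum_apply]
  simp only [AddMonoidAlgebra.coeff_single_apply]
  rw [Finset.sum_ite_eq' ((Finset.Ico (0:ℤ) k) ×ˢ (Finset.Ico (0:ℤ) k)) u (fun _ => (1:ℚ))]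
  congr 1
  simp only [Finset.mem_product, Finset.mem_Ico, eq_iff_iff]
  tauto

lemma Φ_Blk (k : ℕ) (p : ℝ × ℝ) :
    Φ (Blk k) p = rectInd 0 k 0 k p := by
  rw [Φ, Blk_apply, rectInd]
  have h1 : ((0:ℤ) ≤ ⌊p.1⌋) ↔ (0:ℝ) ≤ p.1 := by rw [Int.le_floor]; norm_num
  have h2 : (⌊p.1⌋ < (k:ℤ)) ↔ p.1 < (k:ℝ) := by rw [Int.floor_lt]; norm_num
  have h3 : ((0:ℤ) ≤ ⌊p.2⌋) ↔ (0:ℝ) ≤ p.2 := by rw [Int.le_floor]; norm_num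
  have h4 : (⌊p.2⌋ < (k:ℤ)) ↔ p.2 < (k:ℝ) := by rw [Int.floor_lt]; norm_num
  simp only [h1, h2, h3, h4]

lemma floor_div_bounds (k : ℕ) (hk : 1 ≤ k) (x : ℝ) :
    (k:ℤ) * ⌊x / k⌋ ≤ ⌊x⌋ ∧ ⌊x⌋ < (k:ℤ) * ⌊x / k⌋ + k := by
  have hk0 : (0:ℝ) < k := by positivity
  have h1 : (↑(⌊x / k⌋) : ℝ) ≤ x / k := Int.floor_le _
  have h2 : x / k < ⌊x / k⌋ + 1 := Int.lt_floor_add_one _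
  constructor
  · rw [Int.le_floor]
    push_cast
    calc (k:ℝ) * ⌊x / k⌋ ≤ k * (x / k) := by nlinarith
    _ = x := by field_simp
  · rw [Int.floor_lt]
    push_cast
    calc x = k * (x / k) := by field_simp
    _ < k * (⌊x / k⌋ + 1) := by nlinarith
    _ = k * ⌊x / k⌋ + k := by ring

lemma floor_div_eq (k : ℕ) (hk : 1 ≤ k) (x : ℝ) (a : ℤ)
    (h1 : (k:ℤ) * a ≤ ⌊x⌋) (h2 : ⌊x⌋ < (k:ℤ) * a + k) : ⌊x / k⌋ = a := by
  have hk0 : (0:ℝ) < k := by positivity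
  rw [Int.floor_eq_iff]
  have h1' : ((k:ℝ) * a) ≤ x := by
    calc ((k:ℝ) * a) = ((((k:ℤ) * a : ℤ)):ℝ) := by push_cast; ring
    _ ≤ ⌊x⌋ := by exact_mod_cast h1
    _ ≤ x := Int.floor_le x
  have h2' : x < (k:ℝ) * a + k := by
    calc x < (⌊x⌋:ℝ) + 1 := Int.lt_floor_add_one x
    _ ≤ ((k:ℤ) * a + k : ℤ) := by exact_mod_cast h2
    _ = (k:ℝ) * a + k := by push_cast; ring
  constructor
  · rw [le_div_iff₀ hk0]; nlinarith
  · rw [div_lt_iff₀ hk0]; nlinarith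

lemma smul_inj (k : ℕ) (hk : 1 ≤ k) :
    Function.Injective (fun u : ℤ × ℤ => (k:ℤ) • u) := by
  intro u v h
  simp only [Prod.smul_def, smul_eq_mul, Prod.mk.injEq, Prod.ext_iff] at h ⊢
  have hkz : (k:ℤ) ≠ 0 := by exact_mod_cast Nat.one_le_iff_ne_zero.mp hk
  exact ⟨mul_left_cancel₀ hkz h.1, mul_left_cancel₀ hkz h.2⟩

lemma Blk_mul_apply (k : ℕ) (G : Rng) (v : ℤ × ℤ) :
    (Blk k * G).coeff v = ∑ w ∈ (Finset.Ico (0:ℤ) k) ×ˢ (Finset.Ico (0:ℤ) k), G.coeff (v - w) := by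
  rw [Blk, Finset.sum_mul, AddMonoidAlgebra.coeff_sum, Finsupp.finset_sum_apply]
  refine Finset.sum_congr rfl fun w _ => ?_
  rw [AddMonoidAlgebra.coeff_single_mul_apply, one_mul, neg_add_eq_sub]

lemma Φ_blowup (k : ℕ) (hk : 1 ≤ k) (F : Rng) (p : ℝ × ℝ) :
    Φ (Blk k * Ψ k F) p = F.coeff (⌊p.1 / k⌋, ⌊p.2 / k⌋) := by
  classical
  rw [Φ, Blk_mul_apply]
  obtain ⟨ha1, hb1⟩ := floor_div_bounds k hk p.1
  obtain ⟨ha2, hb2⟩ := floor_div_bounds k hk p.2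
  have hmem : (⌊p.1⌋ - (k:ℤ) * ⌊p.1 / k⌋, ⌊p.2⌋ - (k:ℤ) * ⌊p.2 / k⌋)
      ∈ (Finset.Ico (0:ℤ) k) ×ˢ (Finset.Ico (0:ℤ) k) := by
    simp only [Finset.mem_product, Finset.mem_Ico]
    omega
  rw [Finset.sum_eq_single_of_mem _ hmem]
  · have hpt : ((⌊p.1⌋, ⌊p.2⌋) : ℤ×ℤ) - (⌊p.1⌋ - (k:ℤ) * ⌊p.1 / k⌋, ⌊p.2⌋ - (k:ℤ) * ⌊p.2 / k⌋)
        = (fun u : ℤ×ℤ => (k:ℤ) • u) (⌊p.1 / k⌋, ⌊p.2 / k⌋) := by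
      simp only [Prod.mk_sub_mk, Prod.smul_def, smul_eq_mul, Prod.mk.injEq]
      constructor <;> ring
    rw [hpt, Ψ_coeff, Finsupp.mapDomain_apply (smul_inj k hk)]
  · intro w hw hne
    rw [Ψ_coeff]
    apply Finsupp.mapDomain_notin_range
    rintro ⟨⟨a1, a2⟩, hav⟩
    simp only [Prod.smul_def, smul_eq_mul, Prod.ext_iff, Prod.fst_sub, Prod.snd_sub] at hav
    simp only [Finset.mem_product, Finset.mem_Ico] at hw
    have e1 : ⌊p.1⌋ - w.1 = (k:ℤ) * a1 := hav.1.symm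
    have e2 : ⌊p.2⌋ - w.2 = (k:ℤ) * a2 := hav.2.symm
    have hq1 : ⌊p.1 / (k:ℝ)⌋ = a1 := floor_div_eq k hk p.1 a1 (by omega) (by omega)
    have hq2 : ⌊p.2 / (k:ℝ)⌋ = a2 := floor_div_eq k hk p.2 a2 (by omega) (by omega)
    apply hne
    simp only [Prod.ext_iff]
    constructor
    · simp only [hq1]; omega
    · simp only [hq2]; omega

lemma den_dvd_int (q : ℚ) (m : ℕ) (h : q.den ∣ m) : ∃ z : ℤ, (z:ℚ) = q * m := by
  obtain ⟨t, ht⟩ := h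
  refine ⟨q.num * t, ?_⟩
  subst ht
  push_cast
  rw [← Rat.mul_den_eq_num]
  ring

lemma grid_rep (n : ℕ) (a : Fin n → ℚ) (b1 b2 c1 c2 : Fin n → ℚ)
    (hb : ∀ i, b1 i < b2 i) (hc : ∀ i, c1 i < c2 i) :
    ∃ (D : ℕ) (P : Rng), 1 ≤ D ∧
      (∀ q : ℝ × ℝ, (∑ i, a i * rectInd (b1 i) (b2 i) (c1 i) (c2 i) q)
          = P.coeff (⌊(D:ℝ) * q.1⌋, ⌊(D:ℝ) * q.2⌋)) ∧
      (P.coeff.sum fun _ c => c) = (D:ℚ)^2 * ∑ i, a i * (b2 i - b1 i) * (c2 i - c1 i) := by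
  classical
  set D : ℕ := ∏ i, ((b1 i).den * (b2 i).den * (c1 i).den * (c2 i).den) with hDdef
  have hD1 : 1 ≤ D := Finset.one_le_prod' (fun i _ => Nat.one_le_iff_ne_zero.mpr
    (by simp [Rat.den_ne_zero]))
  have hD0 : (0:ℚ) < D := by exact_mod_cast hD1
  have hD0' : (0:ℝ) < D := by exact_mod_cast hD1
  have hdvd1 : ∀ i, (b1 i).den ∣ D :=
    fun i => dvd_trans ⟨(b2 i).den * ((c1 i).den * (c2 i).den), by ring⟩
      (Finset.dvd_prod_of_mem _ (Finset.mem_univ i))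
  have hdvd2 : ∀ i, (b2 i).den ∣ D :=
    fun i => dvd_trans ⟨(b1 i).den * ((c1 i).den * (c2 i).den), by ring⟩
      (Finset.dvd_prod_of_mem _ (Finset.mem_univ i))
  have hdvd3 : ∀ i, (c1 i).den ∣ D :=
    fun i => dvd_trans ⟨(b1 i).den * ((b2 i).den * (c2 i).den), by ring⟩
      (Finset.dvd_prod_of_mem _ (Finset.mem_univ i))
  have hdvd4 : ∀ i, (c2 i).den ∣ D :=
    fun i => dvd_trans ⟨(b1 i).den * ((b2 i).den * (c1 i).den), by ring⟩
      (Finset.dvd_prod_of_mem _ (Finset.mem_univ i))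
  choose β1 hβ1 using fun i => den_dvd_int (b1 i) D (hdvd1 i)
  choose β2 hβ2 using fun i => den_dvd_int (b2 i) D (hdvd2 i)
  choose γ1 hγ1 using fun i => den_dvd_int (c1 i) D (hdvd3 i)
  choose γ2 hγ2 using fun i => den_dvd_int (c2 i) D (hdvd4 i)
  have hββ : ∀ i, β1 i < β2 i := by
    intro i
    have : (β1 i : ℚ) < (β2 i : ℚ) := by
      rw [hβ1, hβ2]
      exact mul_lt_mul_of_pos_right (hb i) hD0
    exact_mod_cast this
  have hγγ : ∀ i, γ1 i < γ2 i := by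
    intro i
    have : (γ1 i : ℚ) < (γ2 i : ℚ) := by
      rw [hγ1, hγ2]
      exact mul_lt_mul_of_pos_right (hc i) hD0
    exact_mod_cast this
  set box : Fin n → Finset (ℤ×ℤ) :=
    fun i => (Finset.Ico (β1 i) (β2 i)) ×ˢ (Finset.Ico (γ1 i) (γ2 i)) with hbox
  set P : Rng := ∑ i, ∑ w ∈ box i, AddMonoidAlgebra.single w (a i) with hP
  refine ⟨D, P, hD1, ?_, ?_⟩
  · intro q
    have happ : ∀ u : ℤ × ℤ, P.coeff u = ∑ i, if u ∈ box i then a i else 0 := by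
      intro u
      rw [hP, AddMonoidAlgebra.coeff_sum, Finsupp.finset_sum_apply]
      refine Finset.sum_congr rfl fun i _ => ?_
      rw [AddMonoidAlgebra.coeff_sum, Finsupp.finset_sum_apply]
      simp only [AddMonoidAlgebra.coeff_single_apply]
      exact Finset.sum_ite_eq' (box i) u (fun _ => a i)
    rw [happ]
    refine Finset.sum_congr rfl fun i _ => ?_
    have hcast1 : ((β1 i : ℝ)) = (b1 i : ℝ) * D := by exact_mod_cast hβ1 i
    have hcast2 : ((β2 i : ℝ)) = (b2 i : ℝ) * D := by exact_mod_cast hβ2 i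
    have hcast3 : ((γ1 i : ℝ)) = (c1 i : ℝ) * D := by exact_mod_cast hγ1 i
    have hcast4 : ((γ2 i : ℝ)) = (c2 i : ℝ) * D := by exact_mod_cast hγ2 i
    rw [rectInd, mul_ite, mul_one, mul_zero]
    congr 1
    simp only [hbox, Finset.mem_product, Finset.mem_Ico, eq_iff_iff]
    have e1 : ((b1 i : ℝ) ≤ q.1) ↔ (β1 i ≤ ⌊(D:ℝ) * q.1⌋) := by
      rw [Int.le_floor, hcast1]
      constructor
      · intro h; nlinarith
      · intro h; nlinarith
    have e2 : (q.1 < (b2 i : ℝ)) ↔ (⌊(D:ℝ) * q.1⌋ < β2 i) := by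
      rw [Int.floor_lt, hcast2]
      constructor
      · intro h; nlinarith
      · intro h; nlinarith
    have e3 : ((c1 i : ℝ) ≤ q.2) ↔ (γ1 i ≤ ⌊(D:ℝ) * q.2⌋) := by
      rw [Int.le_floor, hcast3]
      constructor
      · intro h; nlinarith
      · intro h; nlinarith
    have e4 : (q.2 < (c2 i : ℝ)) ↔ (⌊(D:ℝ) * q.2⌋ < γ2 i) := by
      rw [Int.floor_lt, hcast4]
      constructor
      · intro h; nlinarith
      · intro h; nlinarith
    rw [e1, e2, e3, e4]
    tauto
  · rw [hP, AddMonoidAlgebra.coeff_sum, ← Finsupp.sum_finset_sum_index (by simp) (by intros; rfl)]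
    have hterm : ∀ i : Fin n, (∑ w ∈ box i, AddMonoidAlgebra.single w (a i)).coeff.sum (fun _ c => c)
        = a i * ((b2 i - b1 i) * D * ((c2 i - c1 i) * D)) := by
      intro i
      rw [AddMonoidAlgebra.coeff_sum, ← Finsupp.sum_finset_sum_index (by simp) (by intros; rfl)]
      have : ∀ w ∈ box i, (AddMonoidAlgebra.single w (a i)).coeff.sum (fun _ c => c) = a i :=
        fun w _ => Finsupp.sum_single_index rfl
      rw [Finset.sum_congr rfl this, Finset.sum_const, hbox, Finset.card_product]
      have hc1 : ((Finset.Ico (β1 i) (β2 i)).card : ℚ) = (b2 i - b1 i) * D := by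
        rw [Int.card_Ico]
        have h1 : ((β2 i - β1 i).toNat : ℤ) = β2 i - β1 i :=
          Int.toNat_of_nonneg (by have := hββ i; omega)
        have : (((β2 i - β1 i).toNat : ℤ) : ℚ) = (β2 i : ℚ) - β1 i := by
          rw [h1]; push_cast; ring
        rw [show (((β2 i - β1 i).toNat : ℕ) : ℚ) = (((β2 i - β1 i).toNat : ℤ) : ℚ) by push_cast; ring,
          this, hβ1 i, hβ2 i]
        ring
      have hc2 : ((Finset.Ico (γ1 i) (γ2 i)).card : ℚ) = (c2 i - c1 i) * D := by
        rw [Int.card_Ico]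
        have h1 : ((γ2 i - γ1 i).toNat : ℤ) = γ2 i - γ1 i :=
          Int.toNat_of_nonneg (by have := hγγ i; omega)
        have : (((γ2 i - γ1 i).toNat : ℤ) : ℚ) = (γ2 i : ℚ) - γ1 i := by
          rw [h1]; push_cast; ring
        rw [show (((γ2 i - γ1 i).toNat : ℕ) : ℚ) = (((γ2 i - γ1 i).toNat : ℤ) : ℚ) by push_cast; ring,
          this, hγ1 i, hγ2 i]
        ring
      rw [nsmul_eq_mul]
      push_cast
      rw [hc1, hc2]
      ring
    rw [Finset.sum_congr rfl (fun i _ => hterm i), Finset.mul_sum]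
    refine Finset.sum_congr rfl fun i _ => ?_
    ring

lemma Φ_sum {ι : Type*} (s : Finset ι) (F : ι → Rng) (p : ℝ × ℝ) :
    Φ (∑ z ∈ s, F z) p = ∑ z ∈ s, Φ (F z) p := by
  rw [Φ, AddMonoidAlgebra.coeff_sum, Finsupp.finset_sum_apply]
  rfl

/-- Vandermonde-type lemma. -/
lemma vdm {K : Type*} [Field K] (s : Finset K) (h0 : (0:K) ∉ s) (d : K → K)
    (hk : ∀ k : ℕ, 1 ≤ k → ∑ γ ∈ s, d γ * γ ^ k = 0) : ∀ γ ∈ s, d γ = 0 := by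
  classical
  induction s using Finset.induction generalizing d with
  | empty => simp
  | @insert a s ha ih =>
    have h0' : (0:K) ∉ s := fun h => h0 (Finset.mem_insert_of_mem h)
    have hane : a ≠ 0 := fun h => h0 (h ▸ Finset.mem_insert_self a s)
    have key : ∀ γ ∈ s, d γ * (γ - a) = 0 := by
      refine ih h0' (fun γ => d γ * (γ - a)) ?_
      intro k hk1
      have h1 := hk (k+1) (by omega)
      have h2 := hk k hk1
      have : ∑ γ ∈ insert a s, d γ * (γ - a) * γ ^ k = 0 := by
        have : ∑ γ ∈ insert a s, d γ * (γ - a) * γ ^ k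
            = (∑ γ ∈ insert a s, d γ * γ ^ (k+1)) - a * ∑ γ ∈ insert a s, d γ * γ ^ k := by
          rw [Finset.mul_sum, ← Finset.sum_sub_distrib]
          exact Finset.sum_congr rfl (fun γ _ => by ring)
        rw [this, h1, h2]; ring
      rwa [Finset.sum_insert ha, sub_self, mul_zero, zero_mul, zero_add] at this
    have hda : d a = 0 := by
      have h1 := hk 1 le_rfl
      rw [Finset.sum_insert ha] at h1
      have hz : ∀ γ ∈ s, d γ * γ ^ 1 = 0 := by
        intro γ hγ
        have hne : γ - a ≠ 0 := sub_ne_zero.mpr (fun h => ha (h ▸ hγ))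
        rcases mul_eq_zero.mp (key γ hγ) with h | h
        · simp [h]
        · exact absurd h hne
      rw [Finset.sum_eq_zero hz, add_zero] at h1
      have h2 : d a * a = 0 := by simpa using h1
      rcases mul_eq_zero.mp h2 with h | h
      · exact h
      · exact absurd h hane
    intro γ hγ
    rcases Finset.mem_insert.mp hγ with h | h
    · rw [h]; exact hda
    · have hne : γ - a ≠ 0 := sub_ne_zero.mpr (fun hh => ha (hh ▸ h))
      rcases mul_eq_zero.mp (key γ h) with hh | hh
      · exact hh
      · exact absurd hh hne

lemma one_mem_span (P : Rng) (hP : (P.coeff.sum fun _ c => c) ≠ 0) :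
    (1 : Rng) ∈ Ideal.span {z : Rng | ∃ k : ℕ, 1 ≤ k ∧ z = Ψ k P} := by
  classical
  by_contra hmem
  have hne : Ideal.span {z : Rng | ∃ k : ℕ, 1 ≤ k ∧ z = Ψ k P} ≠ ⊤ := by
    intro h; exact hmem (h ▸ Submodule.mem_top)
  obtain ⟨𝔪, hmax, hle⟩ := Ideal.exists_le_maximal _ hne
  haveI := hmax
  letI K := Rng ⧸ 𝔪
  letI : Field K := Ideal.Quotient.field 𝔪
  let ψ : Rng →+* K := Ideal.Quotient.mk 𝔪
  let χ : ℤ × ℤ → K := fun u => ψ (AddMonoidAlgebra.single u 1)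
  have χ_add : ∀ u v, χ (u + v) = χ u * χ v := by
    intro u v
    simp only [χ, ← map_mul, AddMonoidAlgebra.single_mul_single, one_mul]
  have χ_zero : χ 0 = 1 := by
    have : (AddMonoidAlgebra.single (0 : ℤ×ℤ) (1:ℚ)) = (1 : Rng) := rfl
    simp [χ, this]
  have χ_ne : ∀ u, χ u ≠ 0 := by
    intro u h
    have : χ u * χ (-u) = 1 := by rw [← χ_add, add_neg_cancel, χ_zero]
    rw [h, zero_mul] at this
    exact zero_ne_one this
  have χ_nsmul : ∀ (k : ℕ) (u : ℤ×ℤ), χ (k • u) = χ u ^ k := by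
    intro k u
    induction k with
    | zero => simpa using χ_zero
    | succ m ih => rw [succ_nsmul, χ_add, ih, pow_succ]
  -- coefficient cast
  let cMap : ℚ →+* K := ψ.comp (algebraMap ℚ Rng)
  have cMap_inj : Function.Injective cMap := cMap.injective
  have ψ_single : ∀ (u : ℤ×ℤ) (c : ℚ), ψ (AddMonoidAlgebra.single u c) = cMap c * χ u := by
    intro u c
    have : AddMonoidAlgebra.single u c
        = (algebraMap ℚ Rng c) * AddMonoidAlgebra.single u (1:ℚ) := by
      rw [AddMonoidAlgebra.coe_algebraMap]
      simp [AddMonoidAlgebra.single_mul_single]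
    rw [this, map_mul]; rfl
  -- evaluate Ψ k P
  have hval : ∀ k : ℕ, 1 ≤ k → ∑ u ∈ P.coeff.support, cMap (P.coeff u) * χ u ^ k = 0 := by
    intro k hk
    have hz : ψ (Ψ k P) = 0 := Ideal.Quotient.eq_zero_iff_mem.mpr (hle (Ideal.subset_span ⟨k, hk, rfl⟩))
    have hPdecomp : Ψ k P = ∑ u ∈ P.coeff.support, AddMonoidAlgebra.single ((k:ℤ) • u) (P.coeff u) := by
      conv_lhs => rw [← AddMonoidAlgebra.sum_coeff_single P]
      rw [Finsupp.sum, map_sum]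
      exact Finset.sum_congr rfl fun u _ => Ψ_single k u (P.coeff u)
    rw [hPdecomp, map_sum] at hz
    rw [← hz]
    refine Finset.sum_congr rfl fun u _ => ?_
    rw [ψ_single, natCast_zsmul, χ_nsmul]
  -- group by values of χ
  set s : Finset K := P.coeff.support.image χ with hs
  have h0s : (0:K) ∉ s := by
    intro h
    obtain ⟨u, _, hu⟩ := Finset.mem_image.mp h
    exact χ_ne u hu
  let d : K → K := fun γ => ∑ u ∈ P.coeff.support.filter (fun u => χ u = γ), cMap (P.coeff u)
  have hfib : ∀ (g : (ℤ×ℤ) → K), ∑ γ ∈ s, ∑ u ∈ P.coeff.support.filter (fun u => χ u = γ), g u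
      = ∑ u ∈ P.coeff.support, g u := by
    intro g
    exact Finset.sum_fiberwise_of_maps_to (fun u hu => Finset.mem_image_of_mem χ hu) g
  have hd : ∀ k : ℕ, 1 ≤ k → ∑ γ ∈ s, d γ * γ ^ k = 0 := by
    intro k hk
    rw [← hval k hk, ← hfib (fun u => cMap (P.coeff u) * χ u ^ k)]
    refine Finset.sum_congr rfl fun γ _ => ?_
    rw [Finset.sum_mul]
    refine Finset.sum_congr rfl fun u hu => ?_
    rw [(Finset.mem_filter.mp hu).2]
  have hzero := vdm s h0s d hd
  have : ∑ γ ∈ s, d γ = 0 := Finset.sum_eq_zero hzero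
  rw [show ∑ γ ∈ s, d γ = ∑ u ∈ P.coeff.support, cMap (P.coeff u) from hfib _] at this
  rw [← map_sum] at this
  exact hP (cMap_inj (by rwa [map_zero, Finsupp.sum] ))

lemma backward_dir
    (T : ℝ × ℝ → ℚ) (n : ℕ) (a : Fin n → ℚ) (b1 b2 c1 c2 : Fin n → ℚ)
    (hb : ∀ i, b1 i < b2 i) (hc : ∀ i, c1 i < c2 i)
    (hT : ∀ p, T p = ∑ i, a i * rectInd (b1 i) (b2 i) (c1 i) (c2 i) p)
    (hA : (∑ i, a i * (b2 i - b1 i) * (c2 i - c1 i)) ≠ 0) :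
    QShapeTilesSquare T := by
  classical
  obtain ⟨D, P, hD1, hrep, hsum⟩ := grid_rep n a b1 b2 c1 c2 hb hc
  have hD0' : (0:ℝ) < D := by exact_mod_cast hD1
  have hTrep : ∀ q : ℝ × ℝ, T q = P.coeff (⌊(D:ℝ)*q.1⌋, ⌊(D:ℝ)*q.2⌋) :=
    fun q => (hT q).trans (hrep q)
  have hPsum : (P.coeff.sum fun _ c => c) ≠ 0 := by
    rw [hsum]
    exact mul_ne_zero (pow_ne_zero 2 (by exact_mod_cast Nat.one_le_iff_ne_zero.mp hD1)) hA
  obtain ⟨c, hcsupp, hc1⟩ := Submodule.mem_span_set.mp (one_mem_span P hPsum)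
  have hex : ∀ z : Rng, ∃ kk : ℕ, 1 ≤ kk ∧ (z ∈ c.support → z = Ψ kk P) := by
    intro z
    by_cases hz : z ∈ c.support
    · obtain ⟨k, hk1, hkz⟩ := hcsupp hz
      exact ⟨k, hk1, fun _ => hkz⟩
    · exact ⟨1, le_rfl, fun h => absurd h hz⟩
  choose kf hkf1 hkf2 using hex
  set N : ℕ := ∏ z ∈ c.support, kf z with hNdef
  have hN1 : 1 ≤ N := Finset.one_le_prod' (fun z _ => hkf1 z)
  have hkm : ∀ z ∈ c.support, kf z * (N / kf z) = N :=
    fun z hz => Nat.mul_div_cancel' (Finset.dvd_prod_of_mem kf hz)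
  set e : Rng → Rng :=
    fun z => c z * Ψ (kf z) (sigX (N / kf z) * sigY (N / kf z)) with hedef
  have hstep : ∀ (k mm : ℕ), 1 ≤ k → k * mm = N → ∀ r : Rng,
      Blk N * (r * Ψ k P) = (r * Ψ k (sigX mm * sigY mm)) * (Blk k * Ψ k P) := by
    intro k mm hk1 hkmm r
    rw [← sigX_mul_sigY, ← sigX_mul_sigY, ← hkmm, sigX_mul k mm hk1, sigY_mul k mm hk1, map_mul]
    ring
  have key : Blk N = ∑ z ∈ c.support, e z * (Blk (kf z) * Ψ (kf z) P) := by
    have h1 : (Blk N : Rng) = Blk N * (c.sum fun mi r => r • mi) := by rw [hc1, mul_one]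
    rw [h1, Finsupp.sum, Finset.mul_sum]
    refine Finset.sum_congr rfl fun z hz => ?_
    have h2 : c z • z = c z * Ψ (kf z) P := by rw [← hkf2 z hz, smul_eq_mul]
    rw [h2, hedef, hstep (kf z) (N / kf z) (hkf1 z) (hkm z hz) (c z)]
  have heval : ∀ p : ℝ × ℝ, rectInd 0 (N:ℝ) 0 (N:ℝ) p
      = ∑ z ∈ c.support, ∑ w ∈ (e z).coeff.support,
          (e z).coeff w * T ((p.1 - w.1)/((kf z : ℝ) * D), (p.2 - w.2)/((kf z : ℝ) * D)) := by
    intro p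
    rw [← Φ_Blk N p, key, Φ_sum]
    refine Finset.sum_congr rfl fun z hz => ?_
    rw [Φ_mul]
    refine Finset.sum_congr rfl fun w _ => ?_
    congr 1
    rw [Φ_blowup (kf z) (hkf1 z) P]
    rw [hTrep ((p.1 - w.1)/((kf z : ℝ) * D), (p.2 - w.2)/((kf z : ℝ) * D))]
    have hkf0 : (0:ℝ) < (kf z : ℝ) := by exact_mod_cast hkf1 z
    congr 2
    · congr 1
      field_simp
    · congr 1
      field_simp
  -- package
  set S : Finset ((_ : Rng) × (ℤ × ℤ)) := c.support.sigma (fun z => (e z).coeff.support) with hSdef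
  refine ⟨(N:ℝ), by exact_mod_cast Nat.lt_of_lt_of_le Nat.zero_lt_one hN1, S.card,
    (fun i => (e (S.equivFin.symm i).1.1).coeff (S.equivFin.symm i).1.2),
    (fun i => ((kf (S.equivFin.symm i).1.1 : ℝ) * D)),
    (fun i => (((S.equivFin.symm i).1.2.1 : ℝ), ((S.equivFin.symm i).1.2.2 : ℝ))), ?_, ?_⟩
  · intro i
    have : (0:ℝ) < (kf (S.equivFin.symm i).1.1 : ℝ) := by
      exact_mod_cast hkf1 (S.equivFin.symm i).1.1
    positivity
  · intro p
    rw [heval p]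
    have := Fintype.sum_equiv S.equivFin
      (fun x : {x // x ∈ S} =>
        (e x.1.1).coeff x.1.2 * T ((p.1 - x.1.2.1)/((kf x.1.1 : ℝ) * D), (p.2 - x.1.2.2)/((kf x.1.1 : ℝ) * D)))
      (fun i =>
        (e (S.equivFin.symm i).1.1).coeff (S.equivFin.symm i).1.2 *
          T ((p.1 - (S.equivFin.symm i).1.2.1)/((kf (S.equivFin.symm i).1.1 : ℝ) * D),
             (p.2 - (S.equivFin.symm i).1.2.2)/((kf (S.equivFin.symm i).1.1 : ℝ) * D)))
      (fun x => by simp only [Equiv.symm_apply_apply])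
    rw [← this, Finset.sum_coe_sort S
      (fun x => (e x.1).coeff x.2 * T ((p.1 - x.2.1)/((kf x.1 : ℝ) * D), (p.2 - x.2.2)/((kf x.1 : ℝ) * D))),
      hSdef, Finset.sum_sigma]

open MeasureTheory in
lemma rectInd_cast (b1 b2 c1 c2 : ℝ) (p : ℝ × ℝ) :
    ((rectInd b1 b2 c1 c2 p : ℚ) : ℝ)
      = Set.indicator (Set.Ico b1 b2 ×ˢ Set.Ico c1 c2) (fun _ => (1:ℝ)) p := by
  rw [rectInd]
  by_cases h : b1 ≤ p.1 ∧ p.1 < b2 ∧ c1 ≤ p.2 ∧ p.2 < c2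
  · rw [if_pos h, Set.indicator_of_mem]
    · norm_num
    · simp only [Set.mem_prod, Set.mem_Ico]
      tauto
  · rw [if_neg h, Set.indicator_of_notMem]
    · norm_num
    · simp only [Set.mem_prod, Set.mem_Ico]
      tauto

open MeasureTheory in
lemma meas_rect (b1 b2 c1 c2 : ℝ) :
    MeasurableSet (Set.Ico b1 b2 ×ˢ Set.Ico c1 c2) :=
  measurableSet_Ico.prod measurableSet_Ico

open MeasureTheory in
lemma vol_rect (b1 b2 c1 c2 : ℝ) :
    volume (Set.Ico b1 b2 ×ˢ Set.Ico c1 c2)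
      = ENNReal.ofReal (b2 - b1) * ENNReal.ofReal (c2 - c1) := by
  have : (volume : Measure (ℝ × ℝ)) = (volume : Measure ℝ).prod volume := rfl
  rw [this, Measure.prod_prod, Real.volume_Ico, Real.volume_Ico]

open MeasureTheory in
lemma integrable_rectInd (b1 b2 c1 c2 : ℝ) :
    Integrable (fun p : ℝ × ℝ => ((rectInd b1 b2 c1 c2 p : ℚ) : ℝ)) volume := by
  have heq : (fun p : ℝ × ℝ => ((rectInd b1 b2 c1 c2 p : ℚ) : ℝ))
      = Set.indicator (Set.Ico b1 b2 ×ˢ Set.Ico c1 c2) (fun _ => (1:ℝ)) :=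
    funext (rectInd_cast b1 b2 c1 c2)
  rw [heq, integrable_indicator_iff (meas_rect b1 b2 c1 c2)]
  refine (integrableOn_const_iff).mpr (Or.inr ?_)
  rw [vol_rect]
  exact ENNReal.mul_lt_top ENNReal.ofReal_lt_top ENNReal.ofReal_lt_top

open MeasureTheory in
lemma integral_rectInd (b1 b2 c1 c2 : ℝ) (h1 : b1 ≤ b2) (h2 : c1 ≤ c2) :
    ∫ p : ℝ × ℝ, ((rectInd b1 b2 c1 c2 p : ℚ) : ℝ) = (b2 - b1) * (c2 - c1) := by
  have heq : (fun p : ℝ × ℝ => ((rectInd b1 b2 c1 c2 p : ℚ) : ℝ))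
      = Set.indicator (Set.Ico b1 b2 ×ˢ Set.Ico c1 c2) (fun _ => (1:ℝ)) :=
    funext (rectInd_cast b1 b2 c1 c2)
  rw [heq, integral_indicator_const (1:ℝ) (meas_rect b1 b2 c1 c2), measureReal_def, vol_rect,
    ENNReal.toReal_mul, ENNReal.toReal_ofReal (by linarith), ENNReal.toReal_ofReal (by linarith)]
  simp

lemma rectInd_affine (ρ v w b1 b2 c1 c2 : ℝ) (hρ : 0 < ρ) (p : ℝ × ℝ) :
    rectInd b1 b2 c1 c2 ((p.1 - v)/ρ, (p.2 - w)/ρ)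
      = rectInd (ρ*b1+v) (ρ*b2+v) (ρ*c1+w) (ρ*c2+w) p := by
  rw [rectInd, rectInd]
  congr 1
  simp only [eq_iff_iff]
  have e1 : b1 ≤ (p.1 - v)/ρ ↔ ρ*b1+v ≤ p.1 := by
    rw [le_div_iff₀ hρ]; constructor <;> intro h <;> nlinarith
  have e2 : (p.1 - v)/ρ < b2 ↔ p.1 < ρ*b2+v := by
    rw [div_lt_iff₀ hρ]; constructor <;> intro h <;> nlinarith
  have e3 : c1 ≤ (p.2 - w)/ρ ↔ ρ*c1+w ≤ p.2 := by
    rw [le_div_iff₀ hρ]; constructor <;> intro h <;> nlinarith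
  have e4 : (p.2 - w)/ρ < c2 ↔ p.2 < ρ*c2+w := by
    rw [div_lt_iff₀ hρ]; constructor <;> intro h <;> nlinarith
  rw [e1, e2, e3, e4]

open MeasureTheory in
lemma forward_dir
    (T : ℝ × ℝ → ℚ) (n : ℕ) (a : Fin n → ℚ) (b1 b2 c1 c2 : Fin n → ℚ)
    (hb : ∀ i, b1 i < b2 i) (hc : ∀ i, c1 i < c2 i)
    (hT : ∀ p, T p = ∑ i, a i * rectInd (b1 i) (b2 i) (c1 i) (c2 i) p)
    (htile : QShapeTilesSquare T)
    (hA : (∑ i, a i * (b2 i - b1 i) * (c2 i - c1 i)) = 0) : False := by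
  classical
  obtain ⟨s, hs, m, A, Rho, V, hRho, hid⟩ := htile
  set G : Fin m → Fin n → (ℝ × ℝ) → ℝ := fun i j p =>
    ((A i * a j : ℚ) : ℝ) * ((rectInd (Rho i * b1 j + (V i).1) (Rho i * b2 j + (V i).1)
      (Rho i * c1 j + (V i).2) (Rho i * c2 j + (V i).2) p : ℚ) : ℝ) with hG
  have hpt : ∀ p : ℝ × ℝ, ((rectInd 0 s 0 s p : ℚ) : ℝ) = ∑ i, ∑ j, G i j p := by
    intro p
    rw [hid p]
    push_cast
    refine Finset.sum_congr rfl fun i _ => ?_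
    rw [hT ((p.1 - (V i).1) / Rho i, (p.2 - (V i).2) / Rho i)]
    push_cast
    rw [Finset.mul_sum]
    refine Finset.sum_congr rfl fun j _ => ?_
    rw [hG]
    push_cast
    rw [rectInd_affine (Rho i) (V i).1 (V i).2 (b1 j) (b2 j) (c1 j) (c2 j) (hRho i) p]
    ring
  have hint : ∀ i j, Integrable (G i j) volume := by
    intro i j
    exact (integrable_rectInd _ _ _ _).const_mul _
  have hIG : ∀ i j, ∫ p : ℝ × ℝ, G i j p
      = ((A i * a j : ℚ) : ℝ) * (Rho i * ((b2 j : ℝ) - b1 j) * (Rho i * ((c2 j : ℝ) - c1 j))) := by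
    intro i j
    rw [hG]
    simp only
    rw [MeasureTheory.integral_const_mul, integral_rectInd _ _ _ _
      (by nlinarith [hRho i, (show ((b1 j : ℝ)) ≤ (b2 j : ℝ) from by exact_mod_cast (hb j).le)])
      (by nlinarith [hRho i, (show ((c1 j : ℝ)) ≤ (c2 j : ℝ) from by exact_mod_cast (hc j).le)])]
    ring_nf
  have hL : ∫ p : ℝ × ℝ, ((rectInd 0 s 0 s p : ℚ) : ℝ) = s * s := by
    rw [integral_rectInd 0 s 0 s hs.le hs.le]
    ring
  have hR : ∫ p : ℝ × ℝ, (∑ i, ∑ j, G i j p) = 0 := by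
    rw [integral_finset_sum _ (fun i _ => integrable_finset_sum _ (fun j _ => hint i j))]
    have : ∀ i : Fin m, ∫ p : ℝ × ℝ, (∑ j, G i j p) = 0 := by
      intro i
      rw [integral_finset_sum _ (fun j _ => hint i j)]
      have : ∀ j : Fin n, ∫ p : ℝ × ℝ, G i j p
          = (A i : ℝ) * (Rho i * Rho i) * ((a j : ℝ) * ((b2 j : ℝ) - b1 j) * ((c2 j : ℝ) - c1 j)) := by
        intro j
        rw [hIG i j]
        push_cast
        ring
      rw [Finset.sum_congr rfl (fun j _ => this j), ← Finset.mul_sum]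
      have hA' : (∑ j, ((a j : ℝ) * ((b2 j : ℝ) - b1 j) * ((c2 j : ℝ) - c1 j))) = 0 := by
        have : ((∑ j, a j * (b2 j - b1 j) * (c2 j - c1 j) : ℚ) : ℝ) = 0 := by
          rw [hA]; norm_num
        push_cast at this
        exact this
      rw [hA', mul_zero]
    rw [Finset.sum_congr rfl (fun i _ => this i), Finset.sum_const, smul_zero]
  have : s * s = 0 := by
    rw [← hL]
    rw [show (fun p : ℝ × ℝ => ((rectInd 0 s 0 s p : ℚ) : ℝ)) = fun p => ∑ i, ∑ j, G i j p
      from funext hpt]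
    exact hR
  nlinarith

/-- A ℚ-weighted tile made of rectangles with rational corners ℚ-shapetiles a
square if and only if its weighted area is nonzero. -/
theorem q_shapetiles_square_iff_area_ne_zero
    (T : ℝ × ℝ → ℚ) (n : ℕ) (a : Fin n → ℚ) (b1 b2 c1 c2 : Fin n → ℚ)
    (hb : ∀ i, b1 i < b2 i) (hc : ∀ i, c1 i < c2 i)
    (hT : ∀ p, T p = ∑ i, a i * rectInd (b1 i) (b2 i) (c1 i) (c2 i) p) :
    QShapeTilesSquare T ↔ (∑ i, a i * (b2 i - b1 i) * (c2 i - c1 i)) ≠ 0 := by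
  constructor
  · intro htile hA0
    exact forward_dir T n a b1 b2 c1 c2 hb hc hT htile hA0
  · intro hA
    exact backward_dir T n a b1 b2 c1 c2 hb hc hT hA
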